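/- arXiv:2311.03403 — 3 statements merged into one kernel-verified Lean document; each statement's English description precedes it below -/
import Mathlib

section
/- Let A be a unital C*-algebra and n ≥ 1. If the set Lg_n(A)_sa of self-adjoint n-tuples (a_1,...,a_n) with a_1²+...+a_n² invertible is dense in (A_sa)^n, then Lg_{n+1}(A)_sa is dense in (A_sa)^{n+1}. -/
open scoped MultiplierAlgebra

namespace RR

/-- `Lg_n(A)_sa` is dense in `A_sa^n`: every self-adjoint `n`-tuple can be approximated by a
self-adjoint unimodular `n`-tuple (one whose sum of squares is invertible). -/
def LgSaDense (A : Type*) [CStarAlgebra A] (n : ℕ) : Prop :=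
  ∀ a : Fin n → A, (∀ i, IsSelfAdjoint (a i)) → ∀ ε : ℝ, 0 < ε →
    ∃ b : Fin n → A, (∀ i, IsSelfAdjoint (b i)) ∧ IsUnit (∑ i, b i ^ 2) ∧ ∀ i, ‖a i - b i‖ < ε

/-- The real rank of a unital C*-algebra: the least `n` such that `Lg_{n+1}(A)_sa` is dense
in `A_sa^{n+1}` (`∞` if there is no such `n`). -/
noncomputable def uRealRank (A : Type*) [CStarAlgebra A] : ℕ∞ :=
  sInf {c : ℕ∞ | ∃ n : ℕ, c = n ∧ LgSaDense A (n + 1)}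

/-- The real rank of a (possibly nonunital) C*-algebra, defined via its unitization.
(For unital `A` this agrees with `uRealRank A`, since `rr (A ⊕ ℂ) = rr A`.) -/
noncomputable def realRank (A : Type*) [NonUnitalCStarAlgebra A] : ℕ∞ :=
  uRealRank (Unitization ℂ A)

end RR

/-- For a unital C*-algebra `A` and `n ≥ 1`, if `Lg_n(A)_sa` is dense in
`(A_sa)^n`, then `Lg_{n+1}(A)_sa` is dense in `(A_sa)^{n+1}`. -/
theorem lgSaDense_succ (A : Type*) [CStarAlgebra A] (n : ℕ) (hn : 1 ≤ n)
    (h : RR.LgSaDense A n) : RR.LgSaDense A (n + 1) := by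
  intro a ha ε hε
  obtain ⟨b, hb, hbu, hba⟩ := h (fun i => a i.castSucc) (fun i => ha i.castSucc) ε hε
  refine ⟨Fin.snoc b (a (Fin.last n)), ?_, ?_, ?_⟩
  · intro i
    refine Fin.lastCases ?_ ?_ i
    · simpa using ha (Fin.last n)
    · intro j; simpa using hb j
  · letI := CStarAlgebra.spectralOrder A
    letI := CStarAlgebra.spectralOrderedRing A
    rw [Fin.sum_univ_castSucc]
    simp only [Fin.snoc_castSucc, Fin.snoc_last]
    have h1 : (0:A) ≤ ∑ i, b i ^ 2 :=
      Finset.sum_nonneg fun i _ => (hb i).sq_nonneg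
    have h2 : (0:A) ≤ (a (Fin.last n)) ^ 2 := (ha (Fin.last n)).sq_nonneg
    exact CStarAlgebra.isUnit_of_le _ (le_add_of_nonneg_right h2) ⟨h1, hbu⟩
  · intro i
    refine Fin.lastCases ?_ ?_ i
    · simpa using hε
    · intro j; simpa using hba j
end

section
/- Let 0 → A → E → B → 0 be an extension of C*-algebras with E unital, let n ∈ ℕ be such that A has property (Λ_n), let (a_0,...,a_n) ∈ (E_sa)^{n+1} be such that (π(a_0),...,π(a_n)) ∈ Lg_{n+1}(B)_sa, and let ε > 0. Then there exists (b_0,...,b_n) ∈ Lg_{n+1}(E)_sa with ‖a_j − b_j‖ < ε and π(a_j) = π(b_j) for j = 0,...,n. -/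
open scoped MultiplierAlgebra

namespace RR

/-- The canonical image of `A` as an ideal in its multiplier algebra `𝓜(ℂ, A)`. -/
noncomputable def mIdeal (A : Type*) [NonUnitalCStarAlgebra A] : Set 𝓜(ℂ, A) :=
  Set.range (DoubleCentralizer.coe ℂ : A → 𝓜(ℂ, A))

/-- Property `(Λ_n)`: every self-adjoint `(n+1)`-tuple in `M(A)` whose image in the corona
`M(A)/A` is unimodular (i.e. whose sum of squares is invertible modulo `A`) can be approximated
arbitrarily well, keeping the same image modulo `A`, by a unimodular self-adjoint tuple. -/
def Lambda (A : Type*) [NonUnitalCStarAlgebra A] (n : ℕ) : Prop :=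
  ∀ a : Fin (n + 1) → 𝓜(ℂ, A), (∀ i, IsSelfAdjoint (a i)) →
    (∃ c : 𝓜(ℂ, A), c * (∑ i, a i ^ 2) - 1 ∈ mIdeal A ∧ (∑ i, a i ^ 2) * c - 1 ∈ mIdeal A) →
    ∀ ε : ℝ, 0 < ε →
      ∃ b : Fin (n + 1) → 𝓜(ℂ, A), (∀ i, IsSelfAdjoint (b i)) ∧ IsUnit (∑ i, b i ^ 2) ∧
        ∀ i, ‖a i - b i‖ < ε ∧ a i - b i ∈ mIdeal A

/-- The extension real rank `xrr(A)`: the least `n` such that `A` has `(Λ_m)` for all `m ≥ n`. -/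
noncomputable def xrr (A : Type*) [NonUnitalCStarAlgebra A] : ℕ∞ :=
  sInf {c : ℕ∞ | ∃ n : ℕ, c = n ∧ ∀ m : ℕ, n ≤ m → Lambda A m}

end RR

namespace RRAux

open MultiplierAlgebra

variable {A : Type*} [NonUnitalCStarAlgebra A]

lemma faithful_left (a : A) (h : ∀ y, a * y = 0) : a = 0 := by
  have h2 := h (star a)
  have h3 : ‖a‖ * ‖a‖ = 0 := by
    rw [← CStarRing.norm_self_mul_star, h2, norm_zero]
  have h4 : ‖a‖ = 0 := by nlinarith [norm_nonneg a]
  exact norm_eq_zero.mp h4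

lemma faithful_right (a : A) (h : ∀ y, y * a = 0) : a = 0 := by
  have h2 := h (star a)
  have h3 : ‖a‖ * ‖a‖ = 0 := by
    rw [← CStarRing.norm_star_mul_self, h2, norm_zero]
  have h4 : ‖a‖ = 0 := by nlinarith [norm_nonneg a]
  exact norm_eq_zero.mp h4

lemma coe_inj : Function.Injective (DoubleCentralizer.coe ℂ : A → 𝓜(ℂ, A)) := by
  intro a b hab
  have h : ∀ x, a * x = b * x := fun x => by
    have h1 := congrArg (fun m : 𝓜(ℂ, A) => m.fst x) hab
    simpa only [DoubleCentralizer.coe_fst, ContinuousLinearMap.mul_apply'] using h1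
  have h2 : a - b = 0 := faithful_left _ (fun y => by rw [sub_mul, h, sub_self])
  exact sub_eq_zero.mp h2

lemma coeHom_eq (a : A) :
    (DoubleCentralizer.coeHom : A →⋆ₙₐ[ℂ] 𝓜(ℂ, A)) a = DoubleCentralizer.coe ℂ a := rfl

lemma norm_coe (a : A) : ‖(DoubleCentralizer.coe ℂ a : 𝓜(ℂ, A))‖ = ‖a‖ := by
  have hinj : Function.Injective (DoubleCentralizer.coeHom : A →⋆ₙₐ[ℂ] 𝓜(ℂ, A)) := coe_inj
  exact NonUnitalStarAlgHom.norm_map _ hinj a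

lemma star_coe (a : A) :
    (DoubleCentralizer.coe ℂ (star a) : 𝓜(ℂ, A)) = star (DoubleCentralizer.coe ℂ a) := by
  have h := map_star (DoubleCentralizer.coeHom : A →⋆ₙₐ[ℂ] 𝓜(ℂ, A)) a
  simpa only [coeHom_eq] using h

lemma coe_zero : (DoubleCentralizer.coe ℂ (0 : A) : 𝓜(ℂ, A)) = 0 :=
  map_zero (DoubleCentralizer.coeHom : A →⋆ₙₐ[ℂ] 𝓜(ℂ, A))

lemma snd_mul_left (z : 𝓜(ℂ, A)) (x k : A) : z.snd (x * k) = x * z.snd k := by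
  have key : ∀ y, (z.snd (x * k) - x * z.snd k) * y = 0 := fun y => by
    rw [sub_mul, z.central (x * k) y, mul_assoc x (z.snd k) y, z.central k y, ← mul_assoc,
      sub_self]
  exact sub_eq_zero.mp (faithful_left _ key)

lemma fst_mul_right (z : 𝓜(ℂ, A)) (k x : A) : z.fst (k * x) = z.fst k * x := by
  have key : ∀ y, y * (z.fst (k * x) - z.fst k * x) = 0 := fun y => by
    rw [mul_sub, ← z.central y (k * x), ← mul_assoc, z.central y k, mul_assoc, sub_self]
  exact sub_eq_zero.mp (faithful_right _ key)

lemma ext_m (x y : 𝓜(ℂ, A)) (h1 : ∀ c, x.fst c = y.fst c) (h2 : ∀ c, x.snd c = y.snd c) :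
    x = y :=
  DoubleCentralizer.ext ℂ A x y
    (Prod.ext (ContinuousLinearMap.ext h1) (ContinuousLinearMap.ext h2))

lemma coe_mul (k : A) (z : 𝓜(ℂ, A)) :
    DoubleCentralizer.coe ℂ k * z = DoubleCentralizer.coe ℂ (z.snd k) := by
  refine ext_m _ _ (fun x => ?_) (fun x => ?_)
  · rw [DoubleCentralizer.mul_fst, ContinuousLinearMap.mul_apply]
    simp only [DoubleCentralizer.coe_fst, ContinuousLinearMap.mul_apply']
    exact (z.central k x).symm
  · rw [DoubleCentralizer.mul_snd, ContinuousLinearMap.mul_apply]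
    simp only [DoubleCentralizer.coe_snd, ContinuousLinearMap.flip_apply,
      ContinuousLinearMap.mul_apply']
    exact snd_mul_left z x k

lemma mul_coe (z : 𝓜(ℂ, A)) (k : A) :
    z * DoubleCentralizer.coe ℂ k = DoubleCentralizer.coe ℂ (z.fst k) := by
  refine ext_m _ _ (fun x => ?_) (fun x => ?_)
  · rw [DoubleCentralizer.mul_fst, ContinuousLinearMap.mul_apply]
    simp only [DoubleCentralizer.coe_fst, ContinuousLinearMap.mul_apply']
    exact fst_mul_right z k x
  · rw [DoubleCentralizer.mul_snd, ContinuousLinearMap.mul_apply]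
    simp only [DoubleCentralizer.coe_snd, ContinuousLinearMap.flip_apply,
      ContinuousLinearMap.mul_apply']
    exact z.central x k

/-- The Busby-type map `E → 𝓜(ℂ, A)` associated to an extension, together with its
key properties. -/
theorem busby_exists (A E B : Type*) [NonUnitalCStarAlgebra A] [CStarAlgebra E]
    [CStarAlgebra B] (ι : A →⋆ₙₐ[ℂ] E) (π : E →⋆ₙₐ[ℂ] B) (hι : Function.Injective ι)
    (hexact : ∀ x : E, π x = 0 ↔ x ∈ Set.range ι) :
    ∃ σ : E →⋆ₙₐ[ℂ] 𝓜(ℂ, A), σ 1 = 1 ∧ (∀ a : A, σ (ι a) = DoubleCentralizer.coe ℂ a) ∧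
      (∀ e : E, σ e = 0 → π e = 0 → e = 0) := by
  classical
  have hπι : ∀ a : A, π (ι a) = 0 := fun a => (hexact _).mpr ⟨a, rfl⟩
  have hch : ∀ x : E, ∃ a : A, π x = 0 → ι a = x := by
    intro x
    by_cases h : π x = 0
    · obtain ⟨a, ha⟩ := (hexact x).mp h
      exact ⟨a, fun _ => ha⟩
    · exact ⟨0, fun h' => absurd h' h⟩
  choose r hr using hch
  have hmemL : ∀ (e : E) (c : A), π (e * ι c) = 0 := fun e c => by
    rw [map_mul, hπι, mul_zero]
  have hmemR : ∀ (e : E) (c : A), π (ι c * e) = 0 := fun e c => by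
    rw [map_mul, hπι, zero_mul]
  have hL : ∀ (e : E) (c : A), ι (r (e * ι c)) = e * ι c := fun e c => hr _ (hmemL e c)
  have hR : ∀ (e : E) (c : A), ι (r (ι c * e)) = ι c * e := fun e c => hr _ (hmemR e c)
  have hnorm : ∀ x : A, ‖ι x‖ = ‖x‖ := fun x => NonUnitalStarAlgHom.norm_map ι hι x
  let L : E → A →L[ℂ] A := fun e => LinearMap.mkContinuous
    { toFun := fun c => r (e * ι c)
      map_add' := fun c d => hι (by
        rw [map_add ι (r _) (r _), hL, hL, hL, map_add, mul_add])
      map_smul' := fun s c => hι (by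
        rw [hL, map_smul, map_smul, hL, RingHom.id_apply, mul_smul_comm]) }
    ‖e‖ (fun c => by
      show ‖r (e * ι c)‖ ≤ ‖e‖ * ‖c‖
      rw [← hnorm (r (e * ι c)), hL]
      calc ‖e * ι c‖ ≤ ‖e‖ * ‖ι c‖ := norm_mul_le _ _
        _ = ‖e‖ * ‖c‖ := by rw [hnorm])
  let R : E → A →L[ℂ] A := fun e => LinearMap.mkContinuous
    { toFun := fun c => r (ι c * e)
      map_add' := fun c d => hι (by
        rw [map_add ι (r _) (r _), hR, hR, hR, map_add, add_mul])
      map_smul' := fun s c => hι (by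
        rw [hR, map_smul, map_smul, hR, RingHom.id_apply, smul_mul_assoc]) }
    ‖e‖ (fun c => by
      show ‖r (ι c * e)‖ ≤ ‖e‖ * ‖c‖
      rw [← hnorm (r (ι c * e)), hR]
      calc ‖ι c * e‖ ≤ ‖ι c‖ * ‖e‖ := norm_mul_le _ _
        _ = ‖e‖ * ‖c‖ := by rw [hnorm, mul_comm])
  have central : ∀ (e : E) (x y : A), R e x * y = x * L e y := fun e x y => hι <| by
    show ι (r (ι x * e) * y) = ι (x * r (e * ι y))
    rw [map_mul, map_mul, hR, hL, mul_assoc]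
  let σ : E →⋆ₙₐ[ℂ] 𝓜(ℂ, A) :=
  { toFun := fun e => ⟨(L e, R e), central e⟩
    map_smul' := fun s e => ext_m _ _
      (fun c => hι (by
        show ι (r (s • e * ι c)) = ι (s • r (e * ι c))
        rw [hL, map_smul, hL, smul_mul_assoc]))
      (fun c => hι (by
        show ι (r (ι c * (s • e))) = ι (s • r (ι c * e))
        rw [hR, map_smul, hR, mul_smul_comm]))
    map_zero' := ext_m _ _
      (fun c => hι (by
        show ι (r ((0 : E) * ι c)) = ι (0 : A)
        rw [hL, map_zero, zero_mul]))
      (fun c => hι (by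
        show ι (r (ι c * (0 : E))) = ι (0 : A)
        rw [hR, map_zero, mul_zero]))
    map_add' := fun e₁ e₂ => ext_m _ _
      (fun c => hι (by
        show ι (r ((e₁ + e₂) * ι c)) = ι (r (e₁ * ι c) + r (e₂ * ι c))
        rw [hL, map_add, hL, hL, add_mul]))
      (fun c => hι (by
        show ι (r (ι c * (e₁ + e₂))) = ι (r (ι c * e₁) + r (ι c * e₂))
        rw [hR, map_add, hR, hR, mul_add]))
    map_mul' := fun e₁ e₂ => ext_m _ _
      (fun c => hι (by
        show ι (r (e₁ * e₂ * ι c)) = ι (r (e₁ * ι (r (e₂ * ι c))))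
        rw [hL, hL, hL, mul_assoc]))
      (fun c => hι (by
        show ι (r (ι c * (e₁ * e₂))) = ι (r (ι (r (ι c * e₁)) * e₂))
        rw [hR, hR, hR, mul_assoc]))
    map_star' := fun e => ext_m _ _
      (fun c => hι (by
        show ι (r (star e * ι c)) = ι (star (r (ι (star c) * e)))
        rw [hL, map_star, hR, star_mul, ← map_star, star_star]))
      (fun c => hι (by
        show ι (r (ι c * star e)) = ι (star (r (e * ι (star c))))
        rw [hR, map_star, hL, star_mul, ← map_star, star_star])) }
  have hσapp : ∀ (e : E), σ e = ⟨(L e, R e), central e⟩ := fun e => rfl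
  have hcoe : ∀ a : A, σ (ι a) = DoubleCentralizer.coe ℂ a := by
    intro a
    refine ext_m _ _ (fun c => hι ?_) (fun c => hι ?_)
    · show ι (r (ι a * ι c)) = ι (a * c)
      rw [hR, map_mul]
    · show ι (r (ι c * ι a)) = ι (c * a)
      rw [hR, map_mul]
  have hone : σ 1 = 1 := by
    refine ext_m _ _ (fun c => hι ?_) (fun c => hι ?_)
    · show ι (r ((1 : E) * ι c)) = ι c
      rw [hL, one_mul]
    · show ι (r (ι c * (1 : E))) = ι c
      rw [hR, mul_one]
  refine ⟨σ, hone, hcoe, fun e hσe hπe => ?_⟩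
  have he : ι (r e) = e := hr e hπe
  have h0 : DoubleCentralizer.coe ℂ (r e) = 0 := by rw [← hcoe, he, hσe]
  have h1 : r e = 0 := coe_inj (h0.trans coe_zero.symm)
  rw [← he, h1, map_zero]

end RRAux

/-- Given an extension `0 → A → E → B → 0` with `E` unital, if `A` has
`(Λ_n)` and `(π(a_0), …, π(a_n))` is unimodular in `B`, then for every `ε > 0` there is a
unimodular self-adjoint tuple `(b_0, …, b_n)` in `E` with `‖a_j - b_j‖ < ε` and
`π(a_j) = π(b_j)` for all `j`. -/
theorem lambda_lift_extension (A E B : Type*) [NonUnitalCStarAlgebra A] [CStarAlgebra E]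
    [CStarAlgebra B]
    (ι : A →⋆ₙₐ[ℂ] E) (π : E →⋆ₙₐ[ℂ] B)
    (hι : Function.Injective ι) (hπ : Function.Surjective π)
    (hexact : ∀ x : E, π x = 0 ↔ x ∈ Set.range ι)
    (n : ℕ) (hΛ : RR.Lambda A n)
    (a : Fin (n + 1) → E) (ha : ∀ i, IsSelfAdjoint (a i))
    (haB : IsUnit (∑ i, (π (a i)) ^ 2)) (ε : ℝ) (hε : 0 < ε) :
    ∃ b : Fin (n + 1) → E, (∀ i, IsSelfAdjoint (b i)) ∧ IsUnit (∑ i, b i ^ 2) ∧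
      ∀ i, ‖a i - b i‖ < ε ∧ π (a i) = π (b i) := by
  classical
  obtain ⟨σ, hσ1, hσι, hσinj⟩ := RRAux.busby_exists A E B ι π hι hexact
  have hπι : ∀ x : A, π (ι x) = 0 := fun x => (hexact _).mpr ⟨x, rfl⟩
  have hπ1 : π 1 = 1 := by
    obtain ⟨x, hx⟩ := hπ 1
    calc π 1 = π 1 * π x := by rw [hx, mul_one]
      _ = π x := by rw [← map_mul, one_mul]
      _ = 1 := hx
  have hπsum : ∀ c : Fin (n + 1) → E, π (∑ i, c i ^ 2) = ∑ i, π (c i) ^ 2 := fun c => by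
    rw [map_sum]
    exact Finset.sum_congr rfl fun i _ => by rw [sq, sq, map_mul]
  have hσsum : ∀ c : Fin (n + 1) → E, σ (∑ i, c i ^ 2) = ∑ i, σ (c i) ^ 2 := fun c => by
    rw [map_sum]
    exact Finset.sum_congr rfl fun i _ => by rw [sq, sq, map_mul]
  have hπs : IsUnit (π (∑ i, a i ^ 2)) := by rw [hπsum]; exact haB
  obtain ⟨e, he⟩ := hπ (↑hπs.unit⁻¹ : B)
  have hσa_sa : ∀ i, IsSelfAdjoint (σ (a i)) := fun i =>
    show star (σ (a i)) = σ (a i) by rw [← map_star, (ha i).star_eq]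
  have hexistc : ∃ c : 𝓜(ℂ, A), c * (∑ i, σ (a i) ^ 2) - 1 ∈ RR.mIdeal A ∧
      (∑ i, σ (a i) ^ 2) * c - 1 ∈ RR.mIdeal A := by
    refine ⟨σ e, ?_, ?_⟩
    · have hk : π (e * (∑ i, a i ^ 2) - 1) = 0 := by
        rw [map_sub, map_mul, he, hπ1, hπs.val_inv_mul, sub_self]
      obtain ⟨k, hk'⟩ := (hexact _).mp hk
      refine ⟨k, ?_⟩
      rw [← hσsum, ← hσι k, hk', map_sub, map_mul, hσ1]
    · have hk : π ((∑ i, a i ^ 2) * e - 1) = 0 := by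
        rw [map_sub, map_mul, he, hπ1, hπs.mul_val_inv, sub_self]
      obtain ⟨k, hk'⟩ := (hexact _).mp hk
      refine ⟨k, ?_⟩
      rw [← hσsum, ← hσι k, hk', map_sub, map_mul, hσ1]
  obtain ⟨b', hb'sa, hb'unit, hb'⟩ := hΛ (fun i => σ (a i)) hσa_sa hexistc ε hε
  have hd : ∀ i, ∃ dd : A, DoubleCentralizer.coe ℂ dd = σ (a i) - b' i := fun i => (hb' i).2
  choose d hdd using hd
  let b : Fin (n + 1) → E := fun i => a i - ι (d i)
  have hπb : ∀ i, π (b i) = π (a i) := fun i => by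
    show π (a i - ι (d i)) = π (a i)
    rw [map_sub, hπι, sub_zero]
  have hdsa : ∀ i, star (d i) = d i := fun i => RRAux.coe_inj (by
    rw [RRAux.star_coe, hdd]
    exact ((hσa_sa i).sub (hb'sa i)).star_eq)
  have hbsa : ∀ i, IsSelfAdjoint (b i) := fun i => by
    show IsSelfAdjoint (a i - ι (d i))
    have hsa : IsSelfAdjoint (ι (d i)) := show star (ι (d i)) = ι (d i) by
      rw [← map_star, hdsa i]
    exact (ha i).sub hsa
  have hσb : ∀ i, σ (b i) = b' i := fun i => by
    show σ (a i - ι (d i)) = b' i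
    rw [map_sub, hσι, hdd, sub_sub_cancel]
  have hnormb : ∀ i, ‖a i - b i‖ < ε := fun i => by
    have h1 : a i - b i = ι (d i) := by
      show a i - (a i - ι (d i)) = ι (d i)
      rw [sub_sub_cancel]
    rw [h1, NonUnitalStarAlgHom.norm_map ι hι, ← RRAux.norm_coe, hdd]
    exact (hb' i).1
  have hσt : σ (∑ i, b i ^ 2) = ∑ i, b' i ^ 2 := by
    rw [hσsum]
    exact Finset.sum_congr rfl fun i _ => by rw [hσb]
  have hMt : IsUnit (σ (∑ i, b i ^ 2)) := hσt ▸ hb'unit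
  have hπts : π (∑ i, b i ^ 2) = π (∑ i, a i ^ 2) := by
    rw [hπsum, hπsum]
    exact Finset.sum_congr rfl fun i _ => by rw [hπb]
  have hπt : IsUnit (π (∑ i, b i ^ 2)) := by rw [hπts]; exact hπs
  obtain ⟨e₁, he₁⟩ := hπ (↑hπt.unit⁻¹ : B)
  have hkL : π (e₁ * (∑ i, b i ^ 2) - 1) = 0 := by
    rw [map_sub, map_mul, he₁, hπ1, hπt.val_inv_mul, sub_self]
  obtain ⟨k₁, hk₁⟩ := (hexact _).mp hkL
  have hkR : π ((∑ i, b i ^ 2) * e₁ - 1) = 0 := by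
    rw [map_sub, map_mul, he₁, hπ1, hπt.mul_val_inv, sub_self]
  obtain ⟨k₂, hk₂⟩ := (hexact _).mp hkR
  have hm₁ : DoubleCentralizer.coe ℂ ((↑hMt.unit⁻¹ : 𝓜(ℂ, A)).snd k₁) =
      DoubleCentralizer.coe ℂ k₁ * (↑hMt.unit⁻¹ : 𝓜(ℂ, A)) :=
    (RRAux.coe_mul k₁ _).symm
  have hm₂ : DoubleCentralizer.coe ℂ ((↑hMt.unit⁻¹ : 𝓜(ℂ, A)).fst k₂) =
      (↑hMt.unit⁻¹ : 𝓜(ℂ, A)) * DoubleCentralizer.coe ℂ k₂ :=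
    (RRAux.mul_coe _ k₂).symm
  have hxt : (e₁ - ι ((↑hMt.unit⁻¹ : 𝓜(ℂ, A)).snd k₁)) * (∑ i, b i ^ 2) = 1 := by
    have h0 : (e₁ - ι ((↑hMt.unit⁻¹ : 𝓜(ℂ, A)).snd k₁)) * (∑ i, b i ^ 2) - 1 = 0 := by
      apply hσinj
      · rw [map_sub, hσ1, map_mul, map_sub, hσι, hm₁, sub_mul, mul_assoc, hMt.val_inv_mul,
          mul_one, ← map_mul, ← hσι k₁, hk₁, map_sub, hσ1]
        abel
      · rw [map_sub, hπ1, map_mul, map_sub, hπι, sub_zero, he₁, hπt.val_inv_mul, sub_self]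
    exact sub_eq_zero.mp h0
  have hty : (∑ i, b i ^ 2) * (e₁ - ι ((↑hMt.unit⁻¹ : 𝓜(ℂ, A)).fst k₂)) = 1 := by
    have h0 : (∑ i, b i ^ 2) * (e₁ - ι ((↑hMt.unit⁻¹ : 𝓜(ℂ, A)).fst k₂)) - 1 = 0 := by
      apply hσinj
      · rw [map_sub, hσ1, map_mul, map_sub, hσι, hm₂, mul_sub, ← mul_assoc, hMt.mul_val_inv,
          one_mul, ← map_mul, ← hσι k₂, hk₂, map_sub, hσ1]
        abel
      · rw [map_sub, hπ1, map_mul, map_sub, hπι, sub_zero, he₁, hπt.mul_val_inv, sub_self]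
    exact sub_eq_zero.mp h0
  have hxy : e₁ - ι ((↑hMt.unit⁻¹ : 𝓜(ℂ, A)).snd k₁) =
      e₁ - ι ((↑hMt.unit⁻¹ : 𝓜(ℂ, A)).fst k₂) := by
    calc e₁ - ι ((↑hMt.unit⁻¹ : 𝓜(ℂ, A)).snd k₁)
        = (e₁ - ι ((↑hMt.unit⁻¹ : 𝓜(ℂ, A)).snd k₁)) *
            ((∑ i, b i ^ 2) * (e₁ - ι ((↑hMt.unit⁻¹ : 𝓜(ℂ, A)).fst k₂))) := by
          rw [hty, mul_one]
      _ = ((e₁ - ι ((↑hMt.unit⁻¹ : 𝓜(ℂ, A)).snd k₁)) * (∑ i, b i ^ 2)) *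
            (e₁ - ι ((↑hMt.unit⁻¹ : 𝓜(ℂ, A)).fst k₂)) := by rw [mul_assoc]
      _ = e₁ - ι ((↑hMt.unit⁻¹ : 𝓜(ℂ, A)).fst k₂) := by rw [hxt, one_mul]
  have htunit : IsUnit (∑ i, b i ^ 2) :=
    ⟨⟨∑ i, b i ^ 2, e₁ - ι ((↑hMt.unit⁻¹ : 𝓜(ℂ, A)).snd k₁), by rw [hxy, hty], hxt⟩, rfl⟩
  exact ⟨b, hbsa, htunit, fun i => ⟨hnormb i, (hπb i).symm⟩⟩
end

section
/- Let A be a C*-algebra and n ∈ ℕ. If A has property (Λ_n), then rr(A) ≤ n. In particular, rr(A) ≤ xrr(A). -/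
open scoped MultiplierAlgebra

section Aux

open scoped MultiplierAlgebra

variable {A : Type*} [NonUnitalCStarAlgebra A]


lemma myMulCancel {w w' : A} (h : ∀ z, w * z = w' * z) : w = w' := by
  have h2 : (w - w') * star (w - w') = 0 := by
    rw [sub_mul, sub_eq_zero]; exact h _
  have := CStarRing.norm_self_mul_star (x := w - w')
  rw [h2, norm_zero] at this
  have : ‖w - w'‖ = 0 := by nlinarith [norm_nonneg (w - w')]
  rwa [norm_eq_zero, sub_eq_zero] at this

lemma myCoeInj : Function.Injective (DoubleCentralizer.coe ℂ : A → 𝓜(ℂ, A)) := by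
  intro x y h
  refine myMulCancel fun z => ?_
  have := congrArg (fun m : 𝓜(ℂ, A) => m.fst z) h
  simpa using this

lemma myIdeal (y : A) (t : 𝓜(ℂ, A)) :
    DoubleCentralizer.coe ℂ (t.snd y) = DoubleCentralizer.coe ℂ y * t := by
  ext z <;> dsimp
  · exact t.central y z
  · refine myMulCancel fun w => ?_
    change z * t.snd y * w = t.snd (z * y) * w
    rw [t.central (z*y) w, mul_assoc, t.central y w, ← mul_assoc]

noncomputable def myPhi : Unitization ℂ A →⋆ₐ[ℂ] 𝓜(ℂ, A) :=
  Unitization.starLift (DoubleCentralizer.coeHom (𝕜 := ℂ) (A := A))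

lemma myPhi_inr (x : A) : myPhi (Unitization.inr x : Unitization ℂ A) = DoubleCentralizer.coe ℂ x := by
  have := Unitization.starLift_symm_apply_apply (myPhi (A := A)) x
  rw [myPhi, Equiv.symm_apply_apply] at this
  exact this.symm

lemma myPhi_inl (c : ℂ) : myPhi (Unitization.inl c : Unitization ℂ A) = algebraMap ℂ 𝓜(ℂ, A) c := by
  rw [← Unitization.algebraMap_eq_inl]
  exact (myPhi (A := A)).commutes c

lemma myPhi_eq (x : Unitization ℂ A) :
    myPhi x = algebraMap ℂ 𝓜(ℂ, A) x.fst + DoubleCentralizer.coe ℂ x.snd := by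
  conv_lhs => rw [← Unitization.inl_fst_add_inr_snd_eq x]
  rw [map_add, myPhi_inl, myPhi_inr]

lemma myEqOne (u : Unitization ℂ A) (h1 : u.fst = 1) (h2 : myPhi u = 1) : u = 1 := by
  rw [myPhi_eq, h1, map_one] at h2
  have hz : DoubleCentralizer.coe ℂ (0 : A) = 0 := by ext z <;> simp
  have h3 : DoubleCentralizer.coe ℂ u.snd = DoubleCentralizer.coe ℂ (0 : A) := by
    rw [hz]
    exact add_eq_left.mp h2
  refine Unitization.ext (by simp [h1]) (by simpa using myCoeInj h3)

lemma myIsUnit (S : Unitization ℂ A) (hfst : S.fst ≠ 0) (h : IsUnit (myPhi S)) : IsUnit S := by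
  obtain ⟨u, hu⟩ := h
  set t : 𝓜(ℂ, A) := ↑u⁻¹ with htdef
  have ht1 : myPhi S * t = 1 := by rw [← hu]; exact u.mul_inv
  have ht2 : t * myPhi S = 1 := by rw [← hu]; exact u.inv_mul
  -- t = μ⁻¹ • (1 - coe y * t)
  set μ : ℂ := S.fst
  set y : A := S.snd
  have hsplit : myPhi S = algebraMap ℂ 𝓜(ℂ, A) μ + DoubleCentralizer.coe ℂ y := myPhi_eq S
  have hkey : μ • t = 1 - DoubleCentralizer.coe ℂ y * t := by
    have : (algebraMap ℂ 𝓜(ℂ, A) μ) * t = myPhi S * t - DoubleCentralizer.coe ℂ y * t := by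
      rw [hsplit, add_mul, add_sub_cancel_right]
    rw [ht1] at this
    rw [← this, Algebra.algebraMap_eq_smul_one, smul_mul_assoc, one_mul]
  set T : Unitization ℂ A := Unitization.inl μ⁻¹ - μ⁻¹ • Unitization.inr (t.snd y) with hT
  have hphiT : myPhi T = t := by
    rw [hT, map_sub, map_smul, myPhi_inl, myPhi_inr, myIdeal,
      Algebra.algebraMap_eq_smul_one]
    rw [← smul_sub, ← hkey, smul_smul, inv_mul_cancel₀ hfst, one_smul]
  have hTfst : T.fst = μ⁻¹ := by
    rw [hT, sub_eq_add_neg, Unitization.fst_add, Unitization.fst_neg, Unitization.fst_inl,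
      Unitization.fst_smul, Unitization.fst_inr, smul_zero, neg_zero, add_zero]
  have h1 : S * T = 1 := by
    refine myEqOne _ ?_ ?_
    · rw [Unitization.fst_mul, hTfst, mul_inv_cancel₀ hfst]
    · rw [map_mul, hphiT, ht1]
  have h2 : T * S = 1 := by
    refine myEqOne _ ?_ ?_
    · rw [Unitization.fst_mul, hTfst, inv_mul_cancel₀ hfst]
    · rw [map_mul, hphiT, ht2]
  exact ⟨⟨S, T, h1, h2⟩, rfl⟩

lemma myNormCoe (d : A) : ‖DoubleCentralizer.coe ℂ d‖ = ‖d‖ := by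
  rw [← DoubleCentralizer.norm_fst, DoubleCentralizer.coe_fst,
    ContinuousLinearMap.opNorm_mul_apply]

lemma myNormInlLe (c : ℂ) : ‖(Unitization.inl c : Unitization ℂ A)‖ ≤ ‖c‖ := by
  rw [Unitization.norm_eq_sup]
  refine sup_le (by simp) ?_
  simp only [Unitization.fst_inl, Unitization.snd_inl, map_zero, add_zero]
  rw [Algebra.algebraMap_eq_smul_one]
  refine (norm_smul_le _ _).trans ?_
  calc ‖c‖ * ‖(1 : A →L[ℂ] A)‖ ≤ ‖c‖ * 1 := by
        gcongr
        exact ContinuousLinearMap.norm_id_le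
    _ = ‖c‖ := mul_one _

lemma myFstReal {x : Unitization ℂ A} (hx : IsSelfAdjoint x) :
    (starRingEnd ℂ) x.fst = x.fst := by
  have := congrArg (fun x : Unitization ℂ A => x.fst) hx.star_eq
  rw [Unitization.fst_star] at this
  exact this

lemma myPerturb (n : ℕ) (a : Fin (n + 1) → Unitization ℂ A) (ha : ∀ i, IsSelfAdjoint (a i))
    {ε : ℝ} (hε : 0 < ε) :
    ∃ a' : Fin (n + 1) → Unitization ℂ A, (∀ i, IsSelfAdjoint (a' i)) ∧
      (∑ i, (a' i).fst ^ 2) ≠ 0 ∧ ∀ i, ‖a i - a' i‖ ≤ ε := by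
  by_cases hc : (∑ i, (a i).fst ^ 2) = 0
  · have hre : ∀ i, (a i).fst = ((a i).fst.re : ℂ) :=
      fun i => (Complex.conj_eq_iff_re.mp (myFstReal (ha i))).symm
    have h2 : ((∑ i, (a i).fst.re ^ 2 : ℝ) : ℂ) = 0 := by
      push_cast
      calc (∑ i, ((a i).fst.re : ℂ) ^ 2) = ∑ i, (a i).fst ^ 2 :=
            Finset.sum_congr rfl fun i _ => by rw [← hre i]
        _ = 0 := hc
    have h3 : ∑ i, (a i).fst.re ^ 2 = 0 := by exact_mod_cast h2
    have hall : ∀ i, (a i).fst = 0 := by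
      intro i
      have h4 := (Finset.sum_eq_zero_iff_of_nonneg (fun i _ => sq_nonneg ((a i).fst.re))).mp h3
        i (Finset.mem_univ i)
      have h5 : (a i).fst.re = 0 := pow_eq_zero_iff two_ne_zero |>.mp h4
      rw [hre i, h5]; norm_num
    refine ⟨fun i => if i = 0 then a i + Unitization.inl ((ε : ℂ)) else a i, fun i => ?_, ?_, fun i => ?_⟩
    · by_cases h0 : i = 0
      · simp only [h0, if_pos rfl]
        refine (ha 0).add ?_
        rw [IsSelfAdjoint, ← Unitization.inl_star, Complex.star_def, Complex.conj_ofReal]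
      · simpa only [if_neg h0] using ha i
    · have : (∑ i, ((if i = 0 then a i + Unitization.inl ((ε : ℂ)) else a i).fst) ^ 2)
          = (ε : ℂ) ^ 2 := by
        rw [Finset.sum_eq_single 0]
        · simp [Unitization.fst_add, Unitization.fst_inl, hall 0]
        · intro i _ hi
          simp only [if_neg hi, hall i]
          ring
        · simp
      rw [this]
      exact pow_ne_zero 2 (by exact_mod_cast hε.ne' : (ε : ℂ) ≠ 0)
    · by_cases h0 : i = 0
      · simp only [h0, eq_self_iff_true, if_true]
        rw [sub_add_cancel_left, norm_neg]
        exact (myNormInlLe _).trans (by simp [abs_of_pos hε, le_refl])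
      · simp [if_neg h0]
        exact hε.le
  · exact ⟨a, ha, hc, fun i => by simp [hε.le]⟩


lemma myAlgMulLeft (c : ℂ) (m : 𝓜(ℂ, A)) : algebraMap ℂ 𝓜(ℂ, A) c * m = c • m := by
  rw [Algebra.algebraMap_eq_smul_one, smul_mul_assoc, one_mul]

lemma myAlgMulRight (c : ℂ) (m : 𝓜(ℂ, A)) : m * algebraMap ℂ 𝓜(ℂ, A) c = c • m := by
  rw [Algebra.algebraMap_eq_smul_one, mul_smul_comm, mul_one]

lemma myCoeSmul (c : ℂ) (x : A) :
    DoubleCentralizer.coe ℂ (c • x) = c • DoubleCentralizer.coe ℂ x := by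
  exact map_smul (DoubleCentralizer.coeHom (𝕜 := ℂ) (A := A)) c x

lemma myCoeStar (x : A) :
    DoubleCentralizer.coe ℂ (star x) = star (DoubleCentralizer.coe ℂ x) := by
  exact map_star (DoubleCentralizer.coeHom (𝕜 := ℂ) (A := A)) x

lemma myFstSum {n : ℕ} (f : Fin n → Unitization ℂ A) :
    (∑ i, f i).fst = ∑ i, (f i).fst :=
  map_sum (Unitization.fstHom ℂ A) f Finset.univ

lemma myFstSq (x : Unitization ℂ A) : (x ^ 2).fst = x.fst ^ 2 := by
  rw [sq, sq, Unitization.fst_mul]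

lemma myMain (n : ℕ) (h : RR.Lambda A n) : RR.LgSaDense (Unitization ℂ A) (n + 1) := by
  intro a ha ε hε
  obtain ⟨a', ha', hμ0, haa'⟩ := myPerturb n a ha (half_pos hε)
  set S : Unitization ℂ A := ∑ i, a' i ^ 2 with hS
  have hSfst : S.fst = ∑ i, (a' i).fst ^ 2 := by
    rw [hS, myFstSum]
    exact Finset.sum_congr rfl fun i _ => myFstSq _
  have hμ : S.fst ≠ 0 := by rw [hSfst]; exact hμ0
  have hφS : (∑ i, myPhi (a' i) ^ 2) = myPhi S := by
    rw [hS, map_sum]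
    exact Finset.sum_congr rfl fun i _ => (map_pow _ _ _).symm
  have hsplit : myPhi S = algebraMap ℂ 𝓜(ℂ, A) S.fst + DoubleCentralizer.coe ℂ S.snd :=
    myPhi_eq S
  have hsa' : ∀ i, IsSelfAdjoint (myPhi (a' i)) := fun i => by
    rw [IsSelfAdjoint, ← map_star, (ha' i).star_eq]
  have hmod : ∃ c : 𝓜(ℂ, A), c * (∑ i, myPhi (a' i) ^ 2) - 1 ∈ RR.mIdeal A ∧
      (∑ i, myPhi (a' i) ^ 2) * c - 1 ∈ RR.mIdeal A := by
    refine ⟨algebraMap ℂ 𝓜(ℂ, A) (S.fst)⁻¹, ⟨(S.fst)⁻¹ • S.snd, ?_⟩, ⟨(S.fst)⁻¹ • S.snd, ?_⟩⟩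
    · rw [myCoeSmul, hφS, hsplit, mul_add, ← map_mul, inv_mul_cancel₀ hμ, map_one,
        myAlgMulLeft]
      abel
    · rw [myCoeSmul, hφS, hsplit, add_mul, ← map_mul, mul_inv_cancel₀ hμ, map_one,
        myAlgMulRight]
      abel
  obtain ⟨b, hbsa, hbunit, hb⟩ := h (fun i => myPhi (a' i)) hsa' hmod (ε / 2) (half_pos hε)
  choose d hd using fun i => (hb i).2
  set bt : Fin (n + 1) → Unitization ℂ A := fun i => a' i - Unitization.inr (d i) with hbt
  have hphib : ∀ i, myPhi (bt i) = b i := fun i => by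
    rw [hbt, map_sub, myPhi_inr, hd i, sub_sub_cancel]
  have hdsa : ∀ i, star (d i) = d i := fun i => by
    refine myCoeInj ?_
    rw [myCoeStar, hd i, star_sub, (hbsa i).star_eq, ← map_star, (ha' i).star_eq]
  have hbtsa : ∀ i, IsSelfAdjoint (bt i) := fun i => by
    rw [IsSelfAdjoint, hbt, star_sub, (ha' i).star_eq, ← Unitization.inr_star, hdsa i]
  have hdval : ∀ i, ‖d i‖ < ε / 2 := fun i => by
    rw [← myNormCoe (d i), hd i]
    exact (hb i).1
  refine ⟨bt, hbtsa, ?_, fun i => ?_⟩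
  · refine myIsUnit _ ?_ ?_
    · rw [myFstSum]
      have : ∀ i, ((bt i) ^ 2).fst = (a' i).fst ^ 2 := fun i => by
        rw [myFstSq, hbt]
        simp only [sub_eq_add_neg, Unitization.fst_add, Unitization.fst_neg,
          Unitization.fst_inr, neg_zero, add_zero]
      rw [Finset.sum_congr rfl fun i _ => this i]
      exact hμ0
    · rw [map_sum]
      have : ∀ i, myPhi ((bt i) ^ 2) = b i ^ 2 := fun i => by rw [map_pow, hphib i]
      rw [Finset.sum_congr rfl fun i _ => this i]
      exact hbunit
  · have heq : a i - bt i = (a i - a' i) + Unitization.inr (d i) := by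
      rw [hbt]; show a i - (a' i - Unitization.inr (d i)) = _; abel
    calc ‖a i - bt i‖ ≤ ‖a i - a' i‖ + ‖(Unitization.inr (d i) : Unitization ℂ A)‖ := by
          rw [heq]; exact norm_add_le _ _
      _ < ε / 2 + ε / 2 := by
          have h1 := haa' i
          have h2 : ‖(Unitization.inr (d i) : Unitization ℂ A)‖ = ‖d i‖ :=
            Unitization.norm_inr _
          rw [h2]
          have := hdval i
          -- strict: need ‖a i - a' i‖ ≤ ε/2 and ‖d i‖ < ε/2
          linarith
      _ = ε := by ring

end Aux


/-- If a C*-algebra `A` has `(Λ_n)`, then `rr(A) ≤ n`; in particular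
`rr(A) ≤ xrr(A)`. -/

theorem realRank_le_of_lambda (A : Type*) [NonUnitalCStarAlgebra A] :
    (∀ n : ℕ, RR.Lambda A n → RR.realRank A ≤ n) ∧ RR.realRank A ≤ RR.xrr A := by
  have main : ∀ n : ℕ, RR.Lambda A n → RR.realRank A ≤ n := by
    intro n hΛ
    exact sInf_le ⟨n, rfl, myMain n hΛ⟩
  refine ⟨main, ?_⟩
  refine le_sInf ?_
  rintro c ⟨n, rfl, hn⟩
  exact main n (hn n le_rfl)
end
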